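/- Let n be a positive integer and let r, c, d be positive real numbers with 0 < d < n. Then there exists a compact set Z ⊂ ℝ^n with Hausdorff dimension d, diameter at most r, and m_d(Z) = c; in particular Z is a d-set. -/

import Mathlib

set_option maxHeartbeats 1000000

open MeasureTheory Set Filter
open scoped NNReal ENNReal

noncomputable section CantorAux

/-- coding map of the self-similar Cantor set with ratio `a`. -/
def gmap (a : ℝ) (ω : ℕ → Bool) : ℝ := ∑' i, (if ω i then (1-a) * a^i else 0)

variable {a : ℝ} (ha : 0 < a) (ha1 : a < 1)

section basic
include ha ha1

lemma term_nonneg (i : ℕ) : (0:ℝ) ≤ (1-a) * a^i :=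
  mul_nonneg (by linarith) (pow_nonneg ha.le i)

lemma gmap_term_abs (ω : ℕ → Bool) (i : ℕ) :
    |(if ω i then (1-a) * a^i else 0)| ≤ (1-a) * a^i := by
  have h1 := term_nonneg ha ha1 i
  by_cases h : ω i <;> simp [h, abs_of_nonneg h1, h1]

lemma gmap_summable (ω : ℕ → Bool) :
    Summable (fun i => (if ω i then (1-a) * a^i else 0)) := by
  have : Summable (fun i : ℕ => (1-a) * a^i) :=
    (summable_geometric_of_lt_one ha.le ha1).mul_left _
  exact this.of_norm_bounded (fun i => by
    simpa [Real.norm_eq_abs] using gmap_term_abs ha ha1 ω i)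

lemma tsum_geom_const : ∑' i : ℕ, (1-a) * a^i = 1 := by
  rw [tsum_mul_left, tsum_geometric_of_lt_one ha.le ha1,
    mul_inv_cancel₀ (by linarith : (1:ℝ)-a ≠ 0)]

/-- tail bound helper -/
lemma abs_tsum_tail_le {g : ℕ → ℝ} {k : ℕ}
    (hg : ∀ i, |g i| ≤ (1-a) * a^i) (h0 : ∀ i < k, g i = 0) :
    |∑' i, g i| ≤ a^k := by
  have hsum : Summable g := by
    refine Summable.of_norm_bounded ?_ (fun i => by simpa [Real.norm_eq_abs] using hg i)
    exact (summable_geometric_of_lt_one ha.le ha1).mul_left _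
  have habs : Summable (fun i => |g i|) := hsum.abs
  have habs' : Summable (fun i => ‖g i‖) := by simpa [Real.norm_eq_abs] using habs
  have h1' : ‖∑' i, g i‖ ≤ ∑' i, ‖g i‖ := norm_tsum_le_tsum_norm habs'
  have h1 : |∑' i, g i| ≤ ∑' i, |g i| := by
    simpa [Real.norm_eq_abs] using h1'
  have h2 : ∑' i, |g i| = ∑' i, |g (i + k)| := by
    rw [← Summable.sum_add_tsum_nat_add k habs]
    have : ∀ i ∈ Finset.range k, |g i| = 0 := fun i hi => by
      simp [h0 i (Finset.mem_range.1 hi)]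
    rw [Finset.sum_eq_zero this, zero_add]
  have h3 : ∑' i, |g (i + k)| ≤ ∑' i : ℕ, (1-a) * a^(i+k) := by
    refine Summable.tsum_le_tsum (fun i => hg (i+k)) (habs.comp_injective (add_left_injective k)) ?_
    exact ((summable_geometric_of_lt_one ha.le ha1).mul_left _).comp_injective
      (add_left_injective k)
  have h4 : ∑' i : ℕ, (1-a) * a^(i+k) = a^k := by
    have : ∀ i : ℕ, (1-a) * a^(i+k) = a^k * ((1-a) * a^i) := fun i => by ring
    simp_rw [this]
    rw [tsum_mul_left, tsum_geom_const ha ha1, mul_one]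
  calc |∑' i, g i| ≤ ∑' i, |g i| := h1
    _ = ∑' i, |g (i + k)| := h2
    _ ≤ ∑' i : ℕ, (1-a) * a^(i+k) := h3
    _ = a^k := h4

/-- agreement bound -/
lemma gmap_agree {ω ω' : ℕ → Bool} {k : ℕ} (h : ∀ i < k, ω i = ω' i) :
    |gmap a ω - gmap a ω'| ≤ a^k := by
  have hs := gmap_summable ha ha1 ω
  have hs' := gmap_summable ha ha1 ω'
  rw [gmap, gmap, ← Summable.tsum_sub hs hs']
  refine abs_tsum_tail_le ha ha1 (fun i => ?_) (fun i hi => by simp [h i hi])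
  have h1 := term_nonneg ha ha1 i
  by_cases hb : ω i <;> by_cases hb' : ω' i <;>
    simp [hb, hb', abs_of_nonneg h1, h1, abs_of_nonpos, neg_nonpos.2 h1]

lemma gmap_nonneg (ω : ℕ → Bool) : 0 ≤ gmap a ω := by
  refine tsum_nonneg (fun i => ?_)
  have h1 := term_nonneg ha ha1 i
  by_cases hb : ω i <;> simp [hb, h1]

lemma gmap_le_one (ω : ℕ → Bool) : gmap a ω ≤ 1 := by
  rw [gmap]
  conv_rhs => rw [← tsum_geom_const ha ha1]
  refine Summable.tsum_le_tsum (fun i => ?_) (gmap_summable ha ha1 ω)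
    ((summable_geometric_of_lt_one ha.le ha1).mul_left _)
  have h1 := term_nonneg ha ha1 i
  by_cases hb : ω i <;> simp [hb, h1]

lemma continuous_gmap : Continuous (gmap a) := by
  refine continuous_tsum (fun i => ?_)
    ((summable_geometric_of_lt_one ha.le ha1).mul_left (1-a)) (fun i ω => ?_)
  · exact Continuous.comp (continuous_of_discreteTopology
      (f := fun b : Bool => if b then (1-a)*a^i else 0)) (continuous_apply i)
  · simpa [Real.norm_eq_abs] using gmap_term_abs ha ha1 ω i


/-- separation bound -/
lemma gmap_sep {ω ω' : ℕ → Bool} {k : ℕ} (hk : ∀ i < k, ω i = ω' i) (hne : ω k ≠ ω' k) :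
    (1-2*a) * a^k ≤ |gmap a ω - gmap a ω'| := by
  set g : ℕ → ℝ := fun i =>
    (if ω i then (1-a) * a^i else 0) - (if ω' i then (1-a) * a^i else 0) with hg
  have hgabs : ∀ i, |g i| ≤ (1-a) * a^i := fun i => by
    have h1 := term_nonneg ha ha1 i
    by_cases hb : ω i <;> by_cases hb' : ω' i <;>
      simp [hg, hb, hb', abs_of_nonneg h1, h1, abs_of_nonpos, neg_nonpos.2 h1]
  have hD : gmap a ω - gmap a ω' = ∑' i, g i := by
    rw [gmap, gmap, ← Summable.tsum_sub (gmap_summable ha ha1 ω) (gmap_summable ha ha1 ω')]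
  have hgk : |g k| = (1-a) * a^k := by
    have h1 := term_nonneg ha ha1 k
    rcases Bool.eq_false_or_eq_true (ω k) with hb | hb <;>
      rcases Bool.eq_false_or_eq_true (ω' k) with hb' | hb' <;>
      simp [hb, hb'] at hne ⊢ <;>
      simp [hg, hb, hb', abs_of_nonneg h1, abs_of_nonpos, neg_nonpos.2 h1]
  -- split g into the k-th term and the tail
  set g2 : ℕ → ℝ := fun i => if k < i then g i else 0 with hg2
  have hsplit : ∀ i, g i = (if i = k then g k else 0) + g2 i := by
    intro i
    rcases lt_trichotomy i k with h | h | h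
    · simp [hg2, h.ne, not_lt.2 h.le, hg, hk i h]
    · simp [hg2, h, lt_irrefl]
    · simp [hg2, h, h.ne']
  have hsum2 : Summable g2 := by
    refine Summable.of_norm_bounded ((summable_geometric_of_lt_one ha.le ha1).mul_left (1-a))
      (fun i => ?_)
    rw [Real.norm_eq_abs]
    by_cases h : k < i
    · simpa [hg2, h] using hgabs i
    · simpa [hg2, h] using term_nonneg ha ha1 i
  have htail : |∑' i, g2 i| ≤ a^(k+1) := by
    refine abs_tsum_tail_le ha ha1 (fun i => ?_) (fun i hi => ?_)
    · by_cases h : k < i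
      · simpa [hg2, h] using hgabs i
      · simpa [hg2, h] using term_nonneg ha ha1 i
    · have : ¬ k < i := by omega
      simp [hg2, this]
  have hsum1 : Summable (fun i => if i = k then g k else 0) := summable_of_ne_finset_zero
    (s := {k}) (fun i hi => by simp [Finset.mem_singleton] at hi; simp [hi])
  have htsum : ∑' i, g i = g k + ∑' i, g2 i := by
    calc ∑' i, g i = ∑' i, ((if i = k then g k else 0) + g2 i) := by
          exact tsum_congr hsplit
      _ = (∑' i, (if i = k then g k else 0)) + ∑' i, g2 i := Summable.tsum_add hsum1 hsum2
      _ = g k + ∑' i, g2 i := by rw [tsum_ite_eq]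
  have habs : (1-a) * a^k - a^(k+1) ≤ |g k + ∑' i, g2 i| := by
    have h1 : |g k| - |∑' i, g2 i| ≤ |g k + ∑' i, g2 i| := by
      have := abs_sub_abs_le_abs_sub (g k) (-(∑' i, g2 i))
      simpa [sub_neg_eq_add] using this
    have := htail
    rw [hgk] at h1
    linarith
  rw [hD, htsum]
  calc (1-2*a) * a^k = (1-a) * a^k - a^(k+1) := by ring
    _ ≤ |g k + ∑' i, g2 i| := habs

lemma gmap_injective (ha2 : a < 1/2) : Function.Injective (gmap a) := by
  intro ω ω' hgeq
  by_contra hne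
  have hex : ∃ i, ω i ≠ ω' i := by
    by_contra h
    push_neg at h
    exact hne (funext h)
  set k := Nat.find hex with hk
  have hsep := gmap_sep ha ha1 (fun i hi => by
    by_contra h
    exact Nat.find_min hex hi h) (Nat.find_spec hex)
  rw [hgeq, sub_self, abs_zero] at hsep
  have : (0:ℝ) < (1-2*a) * a^k := by
    have : (0:ℝ) < 1 - 2*a := by linarith
    positivity
  linarith

end basic

lemma gmap_half_lemmas : (0:ℝ) < 2⁻¹ ∧ (2⁻¹:ℝ) < 1 := by norm_num

/-- prepend a bit -/
def bcons (b : Bool) (ω : ℕ → Bool) : ℕ → Bool := fun n => match n with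
  | 0 => b
  | (m+1) => ω m

lemma gmap_cons (ha : 0 < a) (ha1 : a < 1) (b : Bool) (ω : ℕ → Bool) :
    gmap a (bcons b ω) = (if b then (1-a) else 0) + a * gmap a ω := by
  rw [gmap, Summable.tsum_eq_zero_add (gmap_summable ha ha1 _)]
  have h0 : (if bcons b ω 0 then (1-a) * a^0 else 0) = (if b then (1-a) else 0) := by
    by_cases hb : b <;> simp [bcons, hb]
  have h1 : ∀ n : ℕ, (if bcons b ω (n+1) then (1-a) * a^(n+1) else 0)
      = a * (if ω n then (1-a) * a^n else 0) := by
    intro n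
    by_cases hb : ω n <;> simp [bcons, hb] <;> ring
  rw [h0]
  congr 1
  simp_rw [h1]
  rw [tsum_mul_left]
  rfl

lemma gmap_half_approx : ∀ (k : ℕ) (x : ℝ), x ∈ Icc (0:ℝ) 1 →
    ∃ ω, |gmap 2⁻¹ ω - x| ≤ (2⁻¹:ℝ)^k := by
  intro k
  induction k with
  | zero =>
    intro x hx
    refine ⟨fun _ => false, ?_⟩
    have : gmap 2⁻¹ (fun _ => false) = 0 := by simp [gmap]
    rw [this]
    simp only [pow_zero]
    rw [abs_sub_comm, abs_of_nonneg (by simpa using hx.1)]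
    simpa using hx.2
  | succ k ih =>
    intro x hx
    by_cases h : x ≤ 2⁻¹
    · obtain ⟨ω, hω⟩ := ih (2*x) ⟨by linarith [hx.1], by linarith⟩
      refine ⟨bcons false ω, ?_⟩
      rw [gmap_cons (by norm_num) (by norm_num)]
      simp only [if_neg Bool.false_ne_true]
      have : (0:ℝ) + 2⁻¹ * gmap 2⁻¹ ω - x = 2⁻¹ * (gmap 2⁻¹ ω - 2*x) := by ring
      rw [this, abs_mul, abs_of_nonneg (by norm_num : (0:ℝ) ≤ 2⁻¹), pow_succ]
      calc (2⁻¹:ℝ) * |gmap 2⁻¹ ω - 2*x| ≤ 2⁻¹ * (2⁻¹:ℝ)^k := by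
            exact mul_le_mul_of_nonneg_left hω (by norm_num)
        _ = (2⁻¹:ℝ)^k * 2⁻¹ := by ring
    · obtain ⟨ω, hω⟩ := ih (2*x - 1) ⟨by linarith [not_le.1 h], by linarith [hx.2]⟩
      refine ⟨bcons true ω, ?_⟩
      rw [gmap_cons (by norm_num) (by norm_num)]
      simp only [if_pos]
      have : (1 - 2⁻¹ : ℝ) + 2⁻¹ * gmap 2⁻¹ ω - x = 2⁻¹ * (gmap 2⁻¹ ω - (2*x - 1)) := by ring
      rw [this, abs_mul, abs_of_nonneg (by norm_num : (0:ℝ) ≤ 2⁻¹), pow_succ]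
      calc (2⁻¹:ℝ) * |gmap 2⁻¹ ω - (2*x-1)| ≤ 2⁻¹ * (2⁻¹:ℝ)^k := by
            exact mul_le_mul_of_nonneg_left hω (by norm_num)
        _ = (2⁻¹:ℝ)^k * 2⁻¹ := by ring

lemma Icc_subset_range_gmap_half : Icc (0:ℝ) 1 ⊆ range (gmap 2⁻¹) := by
  intro x hx
  have hcl : IsClosed (range (gmap 2⁻¹)) :=
    (isCompact_range (continuous_gmap (by norm_num) (by norm_num))).isClosed
  rw [← hcl.closure_eq]
  rw [Metric.mem_closure_iff]
  intro ε hε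
  obtain ⟨k, hk⟩ := exists_pow_lt_of_lt_one hε (by norm_num : (2⁻¹:ℝ) < 1)
  obtain ⟨ω, hω⟩ := gmap_half_approx k x hx
  exact ⟨gmap 2⁻¹ ω, mem_range_self ω, lt_of_le_of_lt (by
    rw [Real.dist_eq, abs_sub_comm]; exact hω) hk⟩


section holder

lemma holder_key {a s : ℝ} (ha : 0 < a) (ha2 : a < 1/2) (hs : 0 < s) (has : a ^ s = 2⁻¹)
    (ω ω' : ℕ → Bool) :
    |gmap 2⁻¹ ω - gmap 2⁻¹ ω'| ≤ (1-2*a) ^ (-s) * |gmap a ω - gmap a ω'| ^ s := by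
  have ha1 : a < 1 := by linarith
  have h2a : (0:ℝ) < 1 - 2*a := by linarith
  rcases eq_or_ne ω ω' with rfl | hne
  · simp only [sub_self, abs_zero]
    rw [Real.zero_rpow hs.ne']
    simp
  · have hex : ∃ i, ω i ≠ ω' i := by
      by_contra h
      push_neg at h
      exact hne (funext h)
    set k := Nat.find hex with hk
    have hagree : ∀ i < k, ω i = ω' i := fun i hi => by
      by_contra h
      exact Nat.find_min hex hi h
    have hL : |gmap 2⁻¹ ω - gmap 2⁻¹ ω'| ≤ (2⁻¹:ℝ)^k :=
      gmap_agree (by norm_num) (by norm_num) hagree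
    have hR : (1-2*a) * a^k ≤ |gmap a ω - gmap a ω'| :=
      gmap_sep ha ha1 hagree (Nat.find_spec hex)
    have hRs : ((1-2*a) * a^k) ^ s ≤ |gmap a ω - gmap a ω'| ^ s :=
      Real.rpow_le_rpow (by positivity) hR hs.le
    have heq : ((1-2*a) * a^k) ^ s = (1-2*a)^s * (2⁻¹:ℝ)^k := by
      rw [Real.mul_rpow h2a.le (by positivity)]
      congr 1
      rw [← Real.rpow_natCast a k, ← Real.rpow_mul ha.le, mul_comm, Real.rpow_mul ha.le, has,
        Real.rpow_natCast]
    calc |gmap 2⁻¹ ω - gmap 2⁻¹ ω'| ≤ (2⁻¹:ℝ)^k := hL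
      _ = (1-2*a)^(-s) * ((1-2*a)^s * (2⁻¹:ℝ)^k) := by
          rw [← mul_assoc, ← Real.rpow_add h2a, neg_add_cancel, Real.rpow_zero, one_mul]
      _ ≤ (1-2*a)^(-s) * |gmap a ω - gmap a ω'| ^ s := by
          rw [← heq]
          exact mul_le_mul_of_nonneg_left hRs (Real.rpow_nonneg h2a.le _)

end holder

section core

open ENNReal

/-- Core construction: a compact subset of `Fin n → ℝ` (sup metric) whose `d`-dimensional
Hausdorff measure is nonzero and at most 1. -/
lemma exists_compact_good (n : ℕ) (d : ℝ) (hn : 0 < n) (hd : 0 < d) (hdn : d < n) :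
    ∃ P : Set (Fin n → ℝ), IsCompact P ∧ μH[d] P ≠ 0 ∧ μH[d] P ≤ 1 := by
  classical
  set s : ℝ := d / n with hs_def
  have hn' : (0:ℝ) < n := by exact_mod_cast hn
  have hs : 0 < s := div_pos hd hn'
  have hs1 : s < 1 := (div_lt_one hn').2 hdn
  have hsn : s * n = d := div_mul_cancel₀ d hn'.ne'
  set a : ℝ := (2⁻¹:ℝ) ^ (s⁻¹) with ha_def
  have ha : 0 < a := Real.rpow_pos_of_pos (by norm_num) _
  have hinv : 1 < s⁻¹ := (one_lt_inv₀ hs).2 hs1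
  have ha2 : a < 1/2 := by
    have := Real.rpow_lt_rpow_of_exponent_gt (x := (2⁻¹:ℝ)) (by norm_num) (by norm_num) hinv
    rw [Real.rpow_one] at this
    linarith
  have ha1 : a < 1 := by linarith
  have has : a ^ s = 2⁻¹ := by
    rw [ha_def, ← Real.rpow_mul (by norm_num), inv_mul_cancel₀ hs.ne', Real.rpow_one]
  have had : a ^ d = (2⁻¹:ℝ)^n := by
    rw [← hsn, Real.rpow_mul ha.le, has, Real.rpow_natCast]
  set C : Set ℝ := Set.range (gmap a) with hC_def
  set P : Set (Fin n → ℝ) := Set.univ.pi (fun _ => C) with hP_def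
  have hPc : IsCompact P :=
    isCompact_univ_pi fun _ => isCompact_range (continuous_gmap ha ha1)
  refine ⟨P, hPc, ?_, ?_⟩
  · -- lower bound via Hölder map onto the unit cube
    set F : ℝ → ℝ := fun t => gmap 2⁻¹ (Function.invFun (gmap a) t) with hF_def
    have hFg : ∀ ω, F (gmap a ω) = gmap 2⁻¹ ω := fun ω => by
      rw [hF_def]
      simp only
      rw [Function.leftInverse_invFun (gmap_injective ha ha1 ha2) ω]
    set Kc : ℝ≥0 := Real.toNNReal ((1-2*a) ^ (-s)) with hKc_def
    set Fn : (Fin n → ℝ) → (Fin n → ℝ) := Pi.map (fun _ => F) with hFn_def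
    have hHolder : HolderOnWith Kc s.toNNReal Fn P := by
      intro x hx y hy
      rw [edist_pi_def]
      refine Finset.sup_le fun j _ => ?_
      obtain ⟨ω, hω⟩ := hx j (Set.mem_univ j)
      obtain ⟨ω', hω'⟩ := hy j (Set.mem_univ j)
      have key := holder_key ha ha2 hs has ω ω'
      have hxj : Fn x j = gmap 2⁻¹ ω := by rw [hFn_def, Pi.map_apply, ← hω, hFg]
      have hyj : Fn y j = gmap 2⁻¹ ω' := by rw [hFn_def, Pi.map_apply, ← hω', hFg]
      have h1 : edist (Fn x j) (Fn y j)
          ≤ ENNReal.ofReal ((1-2*a) ^ (-s) * |gmap a ω - gmap a ω'| ^ s) := by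
        rw [edist_dist, Real.dist_eq, hxj, hyj]
        exact ENNReal.ofReal_le_ofReal key
      have h2 : ENNReal.ofReal ((1-2*a) ^ (-s) * |gmap a ω - gmap a ω'| ^ s)
          = (Kc : ℝ≥0∞) * (edist (x j) (y j)) ^ (s.toNNReal : ℝ) := by
        rw [ENNReal.ofReal_mul (Real.rpow_nonneg (by linarith) _)]
        congr 1
        rw [edist_dist, Real.dist_eq, hω, hω']
        rw [← ENNReal.ofReal_rpow_of_nonneg (abs_nonneg _) hs.le]
        congr 2
        exact (Real.coe_toNNReal s hs.le).symm
      rw [h2] at h1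
      refine h1.trans ?_
      gcongr
      exact edist_le_pi_edist x y j
    have himg : Fn '' P = Set.univ.pi (fun _ : Fin n => Set.range (gmap 2⁻¹)) := by
      rw [hP_def, hFn_def, Set.piMap_image_univ_pi]
      congr 1
      funext j
      rw [hC_def, ← Set.image_univ, ← Set.image_comp]
      have : F ∘ gmap a = gmap 2⁻¹ := funext hFg
      rw [this, Set.image_univ]
    have hcube : Set.univ.pi (fun _ : Fin n => Icc (0:ℝ) 1) ⊆ Fn '' P := by
      rw [himg]
      exact Set.pi_mono fun j _ => Icc_subset_range_gmap_half
    have hvol : μH[(n:ℝ)] (Set.univ.pi (fun _ : Fin n => Icc (0:ℝ) 1)) = 1 := by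
      have hpi := hausdorffMeasure_pi_real (ι := Fin n)
      rw [Fintype.card_fin] at hpi
      rw [hpi, volume_pi_pi]
      simp
    have hineq := hHolder.hausdorffMeasure_image_le
      (show (0:ℝ≥0) < s.toNNReal by simpa using hs) (by positivity : (0:ℝ) ≤ (n:ℝ))
    rw [Real.coe_toNNReal s hs.le, hsn] at hineq
    have hchain : (1:ℝ≥0∞) ≤ (Kc : ℝ≥0∞) ^ (n:ℝ) * μH[d] P := by
      calc (1:ℝ≥0∞) = μH[(n:ℝ)] (Set.univ.pi (fun _ : Fin n => Icc (0:ℝ) 1)) := hvol.symm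
        _ ≤ μH[(n:ℝ)] (Fn '' P) := measure_mono hcube
        _ ≤ (Kc : ℝ≥0∞) ^ (n:ℝ) * μH[d] P := hineq
    intro h0
    rw [h0, mul_zero] at hchain
    exact (by norm_num : ¬ ((1:ℝ≥0∞) ≤ 0)) hchain
  · -- upper bound via natural covers
    set t : ∀ _ : ℕ, (Fin n → (Fin _ → Bool)) → Set (Fin n → ℝ) :=
      fun k w => Set.univ.pi (fun j => gmap a '' {ω | ∀ i : Fin k, ω i = w j i}) with ht_def
    have hdiam : ∀ k w, EMetric.diam (t k w) ≤ ENNReal.ofReal (a^k) := by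
      intro k w
      refine EMetric.diam_le fun x hx y hy => ?_
      rw [edist_pi_def]
      refine Finset.sup_le fun j _ => ?_
      obtain ⟨ω, hωmem, hω⟩ := hx j (Set.mem_univ j)
      obtain ⟨ω', hω'mem, hω'⟩ := hy j (Set.mem_univ j)
      rw [edist_dist, Real.dist_eq, ← hω, ← hω']
      refine ENNReal.ofReal_le_ofReal ?_
      refine gmap_agree ha ha1 fun i hi => ?_
      rw [hωmem ⟨i, hi⟩, hω'mem ⟨i, hi⟩]
    have hcover : ∀ k : ℕ, P ⊆ ⋃ w, t k w := by
      intro k x hx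
      choose ψ hψ using fun j => hx j (Set.mem_univ j)
      refine Set.mem_iUnion.2 ⟨fun j i => ψ j i, fun j _ => ⟨ψ j, fun i => rfl, hψ j⟩⟩
    have hle := MeasureTheory.Measure.hausdorffMeasure_le_liminf_sum d P (fun k => ENNReal.ofReal (a^k))
      (by
        rw [← ENNReal.ofReal_zero]
        exact ENNReal.tendsto_ofReal
          (tendsto_pow_atTop_nhds_zero_of_lt_one ha.le ha1))
      t (Filter.Eventually.of_forall hdiam) (Filter.Eventually.of_forall hcover)
    refine hle.trans ?_
    refine Filter.liminf_le_of_frequently_le' (Filter.Frequently.of_forall fun k => ?_)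
    have hterm : ∀ w : Fin n → (Fin k → Bool),
        EMetric.diam (t k w) ^ d ≤ ENNReal.ofReal (((2⁻¹:ℝ)^n)^k) := by
      intro w
      have h1 : EMetric.diam (t k w) ^ d ≤ (ENNReal.ofReal (a^k)) ^ d :=
        ENNReal.rpow_le_rpow (hdiam k w) hd.le
      refine h1.trans_eq ?_
      rw [ENNReal.ofReal_rpow_of_nonneg (by positivity) hd.le]
      congr 1
      rw [← Real.rpow_natCast a k, ← Real.rpow_mul ha.le, mul_comm, Real.rpow_mul ha.le, had,
        Real.rpow_natCast]
    calc ∑ w : Fin n → (Fin k → Bool), EMetric.diam (t k w) ^ d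
        ≤ ∑ _w : Fin n → (Fin k → Bool), ENNReal.ofReal (((2⁻¹:ℝ)^n)^k) :=
          Finset.sum_le_sum fun w _ => hterm w
      _ = (Fintype.card (Fin n → (Fin k → Bool)) : ℝ≥0∞) * ENNReal.ofReal (((2⁻¹:ℝ)^n)^k) := by
          rw [Finset.sum_const, Finset.card_univ, nsmul_eq_mul]
      _ = 1 := by
          rw [Fintype.card_fun, Fintype.card_fun, Fintype.card_bool, Fintype.card_fin,
            Fintype.card_fin]
          rw [← ENNReal.ofReal_natCast, ← ENNReal.ofReal_mul (by positivity)]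
          rw [← ENNReal.ofReal_one]
          congr 1
          push_cast
          rw [← pow_mul, ← pow_mul, mul_comm n k, ← mul_pow]
          norm_num

end core
end CantorAux

open scoped Pointwise

section transport

open ENNReal

/-- Transport the core construction to Euclidean space. -/
lemma exists_compact_E (n : ℕ) (d : ℝ) (hn : 0 < n) (hd : 0 < d) (hdn : d < n) :
    ∃ K : Set (EuclideanSpace ℝ (Fin n)), IsCompact K ∧ μH[d] K ≠ 0 ∧ μH[d] K ≠ ∞ := by
  obtain ⟨P, hPc, hP0, hP1⟩ := exists_compact_good n d hn hd hdn
  set e := WithLp.equiv 2 (∀ _ : Fin n, ℝ) with he_def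
  refine ⟨e.symm '' P, hPc.image (PiLp.continuous_toLp 2 _ : Continuous e.symm), ?_, ?_⟩
  · intro h
    apply hP0
    have heK : e '' (e.symm '' P) = P := by rw [← Set.image_comp]; simp
    have hlip := (show LipschitzWith 1 e from PiLp.lipschitzWith_ofLp 2 (fun _ : Fin n => ℝ)).hausdorffMeasure_image_le
      hd.le (e.symm '' P)
    rw [heK, h] at hlip
    simpa using hlip
  · have heK : e '' (e.symm '' P) = P := by rw [← Set.image_comp]; simp
    have h2 := (show AntilipschitzWith _ e from PiLp.antilipschitzWith_ofLp 2 (fun _ : Fin n => ℝ)).le_hausdorffMeasure_image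
      hd.le (e.symm '' P)
    rw [heK] at h2
    have h3 : μH[d] (e.symm '' P)
        ≤ (((Fintype.card (Fin n) : ℝ≥0) ^ (1/(2:ℝ≥0∞)).toReal : ℝ≥0) : ℝ≥0∞) ^ d * 1 :=
      h2.trans (by gcongr)
    refine ne_top_of_le_ne_top ?_ h3
    rw [mul_one]
    exact ENNReal.rpow_ne_top_of_nonneg hd.le ENNReal.coe_ne_top

end transport

open scoped NNReal ENNReal Pointwise
open MeasureTheory Set Filter Topology

/-- Let n be a positive integer and r, c, d positive reals with d < n.
Then there is a compact set Z ⊂ ℝ^n with Hausdorff dimension d, diameter at most r,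
and m_d(Z) = c (in particular Z is a d-set, since 0 < c < ∞). -/
theorem stmt_4 (n : ℕ) (hn : 0 < n) (r c d : ℝ)
    (hr : 0 < r) (hc : 0 < c) (hd : 0 < d) (hdn : d < n) :
    ∃ Z : Set (EuclideanSpace ℝ (Fin n)), IsCompact Z ∧
      dimH Z = ENNReal.ofReal d ∧ Metric.diam Z ≤ r ∧
      μH[d] Z = ENNReal.ofReal c := by
  classical
  obtain ⟨K, hKc, hK0, hKtop⟩ := exists_compact_E n d hn hd hdn
  set e := WithLp.equiv 2 (∀ _ : Fin n, ℝ) with he_def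
  set mr : ℝ := (μH[d] K).toReal with hmr_def
  have hmr : 0 < mr := ENNReal.toReal_pos hK0 hKtop
  obtain ⟨q, hq⟩ : K.Nonempty := by
    rw [Set.nonempty_iff_ne_empty]
    intro h
    exact hK0 (by rw [h]; exact measure_empty)
  set K₁ : Set (EuclideanSpace ℝ (Fin n)) := (-q) +ᵥ K with hK₁_def
  have hK₁c : IsCompact K₁ := hKc.vadd _
  have hK₁m : μH[d] K₁ = μH[d] K := hausdorffMeasure_vadd _ (Or.inl hd.le) K
  set R : ℝ := Metric.diam K + 1 with hR_def
  have hR : 0 < R := by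
    have := Metric.diam_nonneg (s := K)
    linarith
  have hK₁R : ∀ x ∈ K₁, ‖x‖ ≤ R := by
    intro x hx
    obtain ⟨y, hy, rfl⟩ := hx
    have h1 : ‖-q +ᵥ y‖ = dist y q := by
      rw [vadd_eq_add, dist_eq_norm]
      congr 1
      abel
    rw [h1]
    have := Metric.dist_le_diam_of_mem hKc.isBounded hy hq
    linarith
  obtain ⟨B, halip⟩ : ∃ B : ℝ≥0, AntilipschitzWith B e :=
    ⟨_, (PiLp.antilipschitzWith_ofLp 2 (fun _ : Fin n => ℝ) : AntilipschitzWith _ e)⟩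
  set A : ℝ := (c / mr) ^ (d⁻¹) with hA_def
  have hA : 0 < A := Real.rpow_pos_of_pos (by positivity) _
  set B2 : ℝ := 8*B*R + 2*R with hB2_def
  have hB2 : 0 < B2 := by
    have : (0:ℝ) ≤ B := B.coe_nonneg
    have : (0:ℝ) ≤ 8*B*R := by positivity
    rw [hB2_def]; linarith
  set e0 : ℝ := (n:ℝ) * d⁻¹ - 1 with he0_def
  have hn' : (0:ℝ) < n := by exact_mod_cast hn
  have he0 : 0 < e0 := by
    rw [he0_def]
    have h1 : 1 < (n:ℝ) * d⁻¹ := by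
      rw [← div_eq_mul_inv]
      exact (one_lt_div hd).2 hdn
    linarith
  have htend : Tendsto (fun M : ℕ => A * (M:ℝ)^(-e0) * B2) atTop (𝓝 0) := by
    have h1 : Tendsto (fun x : ℝ => x ^ (-e0)) atTop (𝓝 0) := tendsto_rpow_neg_atTop he0
    have h2 := ((h1.comp tendsto_natCast_atTop_atTop).const_mul A).mul_const B2
    simpa using h2
  obtain ⟨M, hMr, hM1⟩ := ((htend.eventually (gt_mem_nhds hr)).and (eventually_ge_atTop 1)).exists
  have hMpos : (0:ℝ) < M := by
    have : (1:ℝ) ≤ M := by exact_mod_cast hM1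
    linarith
  set lam : ℝ := (c / ((M:ℝ)^n * mr)) ^ (d⁻¹) with hlam_def
  have hlam : 0 < lam := Real.rpow_pos_of_pos (by positivity) _
  have hlam_eq : lam = A * (M:ℝ) ^ (-((n:ℝ) * d⁻¹)) := by
    rw [hlam_def, hA_def]
    have h1 : c / ((M:ℝ)^n * mr) = (c / mr) * (((M:ℝ)^n)⁻¹) := by
      field_simp
    rw [h1, Real.mul_rpow (by positivity) (by positivity)]
    congr 1
    rw [← Real.rpow_natCast (M:ℝ) n, ← Real.rpow_neg hMpos.le, ← Real.rpow_mul hMpos.le]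
    ring_nf
  have hlamM : lam * M = A * (M:ℝ)^(-e0) := by
    rw [hlam_eq, he0_def]
    have : (M:ℝ) = (M:ℝ) ^ (1:ℝ) := (Real.rpow_one _).symm
    calc A * (M:ℝ) ^ (-((n:ℝ) * d⁻¹)) * M
        = A * ((M:ℝ) ^ (-((n:ℝ) * d⁻¹)) * (M:ℝ) ^ (1:ℝ)) := by rw [← this]; ring
      _ = A * (M:ℝ) ^ (-((n:ℝ) * d⁻¹) + 1) := by rw [← Real.rpow_add hMpos]
      _ = A * (M:ℝ) ^ (-((n:ℝ) * d⁻¹ - 1)) := by ring_nf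
  set S : Set (EuclideanSpace ℝ (Fin n)) := lam • K₁ with hS_def
  have hSc : IsCompact S := hK₁c.smul lam
  have hSμ : μH[d] S = ENNReal.ofReal (c / (M:ℝ)^n) := by
    rw [hS_def, MeasureTheory.Measure.hausdorffMeasure_smul₀ hd.le hlam.ne' K₁, hK₁m]
    rw [Real.nnnorm_of_nonneg hlam.le, ENNReal.smul_def, smul_eq_mul,
      ENNReal.coe_rpow_of_nonneg _ hd.le, ← ENNReal.ofReal_eq_coe_nnreal hlam.le,
      ENNReal.ofReal_rpow_of_pos hlam, ← ENNReal.ofReal_toReal hKtop, ← hmr_def,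
      ← ENNReal.ofReal_mul (by positivity)]
    congr 1
    rw [hlam_def, ← Real.rpow_natCast _ n]
    rw [← Real.rpow_mul (by positivity), inv_mul_cancel₀ hd.ne', Real.rpow_one]
    rw [Real.rpow_natCast]
    field_simp
  have hSR : ∀ z ∈ S, ‖z‖ ≤ lam * R := by
    intro z hz
    obtain ⟨w, hw, rfl⟩ := hz
    rw [norm_smul, Real.norm_of_nonneg hlam.le]
    exact mul_le_mul_of_nonneg_left (hK₁R w hw) hlam.le
  set p : (Fin n → Fin M) → EuclideanSpace ℝ (Fin n) :=
    fun v => e.symm (fun j => 4*lam*R*(v j : ℝ)) with hp_def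
  have hpe : ∀ v j, e (p v) j = 4*lam*R*(v j : ℝ) := by
    intro v j
    rw [hp_def]
    simp
  set copy : (Fin n → Fin M) → Set (EuclideanSpace ℝ (Fin n)) :=
    fun v => p v +ᵥ S with hcopy_def
  have hcopyc : ∀ v, IsCompact (copy v) := fun v => hSc.vadd _
  have hcopyμ : ∀ v, μH[d] (copy v) = ENNReal.ofReal (c / (M:ℝ)^n) := fun v => by
    rw [hcopy_def]
    rw [hausdorffMeasure_vadd _ (Or.inl hd.le) S]
    exact hSμ
  have hcopyball : ∀ v, copy v ⊆ Metric.closedBall (p v) (lam * R) := by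
    intro v y hy
    obtain ⟨z, hz, rfl⟩ := hy
    rw [Metric.mem_closedBall]
    have : dist (p v +ᵥ z) (p v) = ‖z‖ := by
      rw [vadd_eq_add, dist_eq_norm]
      congr 1
      abel
    rw [this]
    exact hSR z hz
  have hpdist : ∀ v w, v ≠ w → 4*lam*R ≤ dist (p v) (p w) := by
    intro v w hvw
    obtain ⟨j, hj⟩ := Function.ne_iff.1 hvw
    have h1 : dist (e (p v) j) (e (p w) j) ≤ dist (e (p v)) (e (p w)) :=
      dist_le_pi_dist (e (p v)) (e (p w)) j
    have h2 : dist (e (p v)) (e (p w)) ≤ dist (p v) (p w) := by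
      have := (show LipschitzWith 1 e from PiLp.lipschitzWith_ofLp 2 (fun _ : Fin n => ℝ)).dist_le_mul (p v) (p w)
      simpa using this
    have h3 : (1:ℝ) ≤ |(v j : ℝ) - (w j : ℝ)| := by
      have hne : (v j : ℕ) ≠ (w j : ℕ) := fun h => hj (Fin.val_injective h)
      rcases lt_or_gt_of_ne hne with h | h
      · rw [abs_sub_comm, abs_of_nonneg (by
          have : ((v j : ℕ):ℝ) ≤ ((w j : ℕ):ℝ) := by exact_mod_cast h.le
          linarith)]
        have : ((v j : ℕ):ℝ) + 1 ≤ ((w j : ℕ):ℝ) := by exact_mod_cast h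
        linarith
      · rw [abs_of_nonneg (by
          have : ((w j : ℕ):ℝ) ≤ ((v j : ℕ):ℝ) := by exact_mod_cast h.le
          linarith)]
        have : ((w j : ℕ):ℝ) + 1 ≤ ((v j : ℕ):ℝ) := by exact_mod_cast h
        linarith
    have h4 : dist (e (p v) j) (e (p w) j) = 4*lam*R * |(v j : ℝ) - (w j : ℝ)| := by
      rw [hpe, hpe, Real.dist_eq, ← mul_sub, abs_mul, abs_of_nonneg (by positivity)]
    calc 4*lam*R = 4*lam*R * 1 := by ring
      _ ≤ 4*lam*R * |(v j : ℝ) - (w j : ℝ)| := by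
          exact mul_le_mul_of_nonneg_left h3 (by positivity)
      _ = dist (e (p v) j) (e (p w) j) := h4.symm
      _ ≤ dist (p v) (p w) := h1.trans h2
  have hdisj : Pairwise (Function.onFun Disjoint copy) := by
    intro v w hvw
    have hballs : Disjoint (Metric.closedBall (p v) (lam*R)) (Metric.closedBall (p w) (lam*R)) := by
      apply Metric.closedBall_disjoint_closedBall
      have := hpdist v w hvw
      nlinarith [mul_pos hlam hR]
    exact hballs.mono (hcopyball v) (hcopyball w)
  have hZμ : μH[d] (⋃ v, copy v) = ENNReal.ofReal c := by
    have hmeas : ∀ v, MeasurableSet (copy v) := fun v => (hcopyc v).isClosed.measurableSet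
    rw [measure_iUnion hdisj hmeas]
    rw [tsum_fintype]
    simp_rw [hcopyμ]
    rw [Finset.sum_const, Finset.card_univ, Fintype.card_fun, Fintype.card_fin, Fintype.card_fin,
      nsmul_eq_mul]
    rw [← ENNReal.ofReal_natCast (M^n), ← ENNReal.ofReal_mul (by positivity)]
    congr 1
    push_cast
    field_simp
  refine ⟨⋃ v, copy v, isCompact_iUnion hcopyc, ?_, ?_, ?_⟩
  rotate_left
  · -- diameter
    have hsub : (⋃ v, copy v) ⊆ Metric.closedBall 0 ((B:ℝ)*(4*lam*R*M) + lam*R) := by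
      intro x hx
      obtain ⟨v, hv⟩ := Set.mem_iUnion.1 hx
      have h1 : dist x (p v) ≤ lam*R := hcopyball v hv
      have h2 : dist (p v) 0 ≤ (B:ℝ) * (4*lam*R*M) := by
        have h3 := halip.le_mul_dist (p v) 0
        have h4 : dist (e (p v)) (e 0) ≤ 4*lam*R*M := by
          rw [show e 0 = 0 from rfl]
          rw [dist_pi_le_iff (by positivity)]
          intro j
          rw [Pi.zero_apply, Real.dist_eq, sub_zero, hpe, abs_of_nonneg (by positivity)]
          have hvj : ((v j : ℕ):ℝ) ≤ M := by
            exact_mod_cast (v j).is_lt.le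
          nlinarith [mul_pos (mul_pos hlam hR) hMpos]
        calc dist (p v) 0 ≤ (B:ℝ) * dist (e (p v)) (e 0) := h3
          _ ≤ (B:ℝ) * (4*lam*R*M) := by
              exact mul_le_mul_of_nonneg_left h4 B.coe_nonneg
      rw [Metric.mem_closedBall]
      calc dist x 0 ≤ dist x (p v) + dist (p v) 0 := dist_triangle _ _ _
        _ ≤ (B:ℝ)*(4*lam*R*M) + lam*R := by linarith
    have hB0 : (0:ℝ) ≤ B := B.coe_nonneg
    have hρ : (0:ℝ) ≤ (B:ℝ)*(4*lam*R*M) + lam*R := by positivity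
    calc Metric.diam (⋃ v, copy v)
        ≤ Metric.diam (Metric.closedBall (0:EuclideanSpace ℝ (Fin n))
            ((B:ℝ)*(4*lam*R*M) + lam*R)) :=
          Metric.diam_mono hsub Metric.isBounded_closedBall
      _ ≤ 2 * ((B:ℝ)*(4*lam*R*M) + lam*R) := Metric.diam_closedBall hρ
      _ ≤ B2 * (lam * M) := by
          rw [hB2_def]
          have h1 : (1:ℝ) ≤ M := by exact_mod_cast hM1
          nlinarith [mul_pos hlam hR]
      _ = A * (M:ℝ)^(-e0) * B2 := by rw [← hlamM]; ring
      _ ≤ r := hMr.le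
  · -- measure
    exact hZμ
  · -- dimension
    have hco : ((d.toNNReal : ℝ≥0) : ℝ) = d := Real.coe_toNNReal d hd.le
    have h0 : μH[((d.toNNReal : ℝ≥0) : ℝ)] (⋃ v, copy v) ≠ 0 := by
      rw [hco, hZμ]
      simp only [ne_eq, ENNReal.ofReal_eq_zero, not_le]
      exact hc
    have htop' : μH[((d.toNNReal : ℝ≥0) : ℝ)] (⋃ v, copy v) ≠ ⊤ := by
      rw [hco, hZμ]
      exact ENNReal.ofReal_ne_top
    have hdim := dimH_of_hausdorffMeasure_ne_zero_ne_top h0 htop'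
    rw [hdim]
    rfl
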